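/- In a quasitriangular Hopf algebra A with R-matrix ρ = Σ e⊗e', for all a ∈ A: Σ a·s(e) ⊗ e' = Σ s(e)a₂ ⊗ s⁻¹(a₃)e'a₁. -/

import Mathlib

open scoped TensorProduct
open Coalgebra HopfAlgebra

section helpers
variable {k : Type*} [Field k] {A : Type*} [Ring A] [HopfAlgebra k A]

local notation "σ" => HopfAlgebra.antipode (R := k)

lemma bp5_counit_smul_map {M : Type*} [AddCommMonoid M] [Module k M]
    {c : A} {ι : Type*} (r : Coalgebra.Repr k c ι) (f : A →ₗ[k] M) :
    ∑ i ∈ r.index, Coalgebra.counit (R:=k) (r.left i) • f (r.right i) = f c := by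
  have h2 := congrArg (fun t => TensorProduct.lid k M (LinearMap.lTensor k f t))
    (Coalgebra.sum_counit_tmul_eq (R:=k) r)
  simp only [map_sum, LinearMap.lTensor_tmul, TensorProduct.lid_tmul, one_smul] at h2
  simpa using h2

lemma bp5_smul_counit_map {M : Type*} [AddCommMonoid M] [Module k M]
    {c : A} {ι : Type*} (r : Coalgebra.Repr k c ι) (f : A →ₗ[k] M) :
    ∑ i ∈ r.index, Coalgebra.counit (R:=k) (r.right i) • f (r.left i) = f c := by
  have h2 := congrArg (fun t => TensorProduct.rid k M (LinearMap.rTensor k f t))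
    (Coalgebra.sum_tmul_counit_eq (R:=k) r)
  simp only [map_sum, LinearMap.rTensor_tmul, TensorProduct.rid_tmul, one_smul] at h2
  simpa using h2

/-- product of two representations is a representation of the product -/
noncomputable def bp5_mulRepr {x y : A} {ι₁ ι₂ : Type*} (rx : Coalgebra.Repr k x ι₁)
    (ry : Coalgebra.Repr k y ι₂) :
    Coalgebra.Repr k (x * y) (ι₁ × ι₂) where
  index := rx.index ×ˢ ry.index
  left := fun p => rx.left p.1 * ry.left p.2
  right := fun p => rx.right p.1 * ry.right p.2
  eq := by
    have hc : Coalgebra.comul (R:=k) (x*y) = Coalgebra.comul x * Coalgebra.comul y := by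
      simpa using map_mul (Bialgebra.comulAlgHom k A) x y
    rw [hc, ← rx.eq, ← ry.eq, Finset.sum_mul_sum, Finset.sum_product]
    simp [Algebra.TensorProduct.tmul_mul_tmul]

@[simp] lemma bp5_mulRepr_index {x y : A} {ι₁ ι₂ : Type*} (rx : Coalgebra.Repr k x ι₁) (ry : Coalgebra.Repr k y ι₂) :
    (bp5_mulRepr rx ry).index = rx.index ×ˢ ry.index := rfl
@[simp] lemma bp5_mulRepr_left {x y : A} {ι₁ ι₂ : Type*} (rx : Coalgebra.Repr k x ι₁) (ry : Coalgebra.Repr k y ι₂)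
    (p) : (bp5_mulRepr rx ry).left p = rx.left p.1 * ry.left p.2 := rfl
@[simp] lemma bp5_mulRepr_right {x y : A} {ι₁ ι₂ : Type*} (rx : Coalgebra.Repr k x ι₁) (ry : Coalgebra.Repr k y ι₂)
    (p) : (bp5_mulRepr rx ry).right p = rx.right p.1 * ry.right p.2 := rfl

/-- trilinear map `u ⊗ (v ⊗ w) ↦ L u * (M v * N w)` -/
noncomputable def bp5_tri (L M N : A →ₗ[k] A) : A ⊗[k] (A ⊗[k] A) →ₗ[k] A :=
  LinearMap.mul' k A ∘ₗ TensorProduct.map L (LinearMap.mul' k A ∘ₗ TensorProduct.map M N)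

@[simp] lemma bp5_tri_apply (L M N : A →ₗ[k] A) (u v w : A) :
    bp5_tri L M N (u ⊗ₜ[k] (v ⊗ₜ[k] w)) = L u * (M v * N w) := rfl

lemma bp5_antipode_one : σ (1:A) = 1 := by
  simpa [Algebra.TensorProduct.one_def] using
    HopfAlgebra.mul_antipode_rTensor_comul_apply (R:=k) (1:A)

lemma bp5_antipode_mul (x y : A) : σ (x * y) = σ y * σ x := by
  classical
  set rx := ℛ k x with hrx
  set ry := ℛ k y with hry
  set rx1 : (i : A × A) → Coalgebra.Repr k (rx.left i) (A × A) := fun i => ℛ k (rx.left i) with hrx1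
  set rx2 : (i : A × A) → Coalgebra.Repr k (rx.right i) (A × A) := fun i => ℛ k (rx.right i) with hrx2
  set ry1 : (j : A × A) → Coalgebra.Repr k (ry.left j) (A × A) := fun j => ℛ k (ry.left j) with hry1
  set ry2 : (j : A × A) → Coalgebra.Repr k (ry.right j) (A × A) := fun j => ℛ k (ry.right j) with hry2
  have hεmul : ∀ u v : A, Coalgebra.counit (R:=k) (u*v)
      = Coalgebra.counit (R:=k) u * Coalgebra.counit (R:=k) v := fun u v => by
    simpa using map_mul (Bialgebra.counitAlgHom k A) u v
  -- Step A
  have stepA : σ y * σ x = ∑ j ∈ ry.index, ∑ i ∈ rx.index,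
      (Coalgebra.counit (R:=k) (rx.right i) * Coalgebra.counit (R:=k) (ry.right j)) •
        (σ (ry.left j) * σ (rx.left i)) := by
    have hx : σ x = ∑ i ∈ rx.index, Coalgebra.counit (R:=k) (rx.right i) • σ (rx.left i) :=
      (bp5_smul_counit_map rx (HopfAlgebra.antipode (R:=k))).symm
    have hy : σ y = ∑ j ∈ ry.index, Coalgebra.counit (R:=k) (ry.right j) • σ (ry.left j) :=
      (bp5_smul_counit_map ry (HopfAlgebra.antipode (R:=k))).symm
    rw [hx, hy, Finset.sum_mul]
    refine Finset.sum_congr rfl fun j _ => ?_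
    rw [Finset.mul_sum]
    refine Finset.sum_congr rfl fun i _ => ?_
    rw [smul_mul_assoc, Algebra.mul_smul_comm, smul_smul, mul_comm]
  -- Step B
  have stepB : σ y * σ x = ∑ j ∈ ry.index, ∑ q ∈ (ry2 j).index, ∑ i ∈ rx.index,
      ∑ p ∈ (rx2 i).index,
      (σ (ry.left j) * σ (rx.left i)) *
        (((rx2 i).left p * (ry2 j).left q) * σ ((rx2 i).right p * (ry2 j).right q)) := by
    rw [stepA]
    refine Finset.sum_congr rfl fun j _ => ?_
    rw [Finset.sum_comm]
    refine Finset.sum_congr rfl fun i _ => ?_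
    have hprod := HopfAlgebra.sum_mul_antipode_eq_smul (R:=k)
      (bp5_mulRepr (rx2 i) (ry2 j))
    have hprod' : ∑ pq ∈ (rx2 i).index ×ˢ (ry2 j).index,
        ((rx2 i).left pq.1 * (ry2 j).left pq.2) *
          σ ((rx2 i).right pq.1 * (ry2 j).right pq.2)
        = Coalgebra.counit (R:=k) (rx.right i * ry.right j) • 1 := hprod
    rw [Finset.sum_product_right] at hprod'
    have : (Coalgebra.counit (R:=k) (rx.right i) * Coalgebra.counit (R:=k) (ry.right j)) •
        (σ (ry.left j) * σ (rx.left i))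
        = (σ (ry.left j) * σ (rx.left i)) *
          ((Coalgebra.counit (R:=k) (rx.right i * ry.right j)) • (1:A)) := by
      rw [hεmul, Algebra.mul_smul_comm, mul_one]
    rw [this, ← hprod', Finset.mul_sum]
    refine Finset.sum_congr rfl fun q _ => ?_
    rw [Finset.mul_sum]
  -- Step C: x-coassociativity and collapse of the x-part
  have stepC : σ y * σ x = ∑ j ∈ ry.index, ∑ q ∈ (ry2 j).index,
      σ (ry.left j) * ((ry2 j).left q * σ (x * (ry2 j).right q)) := by
    rw [stepB]
    refine Finset.sum_congr rfl fun j _ => Finset.sum_congr rfl fun q _ => ?_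
    have hC := congrArg (bp5_tri (LinearMap.mulLeft k (σ (ry.left j)) ∘ₗ
        HopfAlgebra.antipode (R:=k)) (LinearMap.mulRight k ((ry2 j).left q))
        (HopfAlgebra.antipode (R:=k) ∘ₗ LinearMap.mulRight k ((ry2 j).right q)))
      (Coalgebra.sum_tmul_tmul_eq (R:=k) rx rx1 rx2)
    simp only [map_sum, bp5_tri_apply, LinearMap.comp_apply, LinearMap.mulLeft_apply,
      LinearMap.mulRight_apply] at hC
    rw [← hC]
    have collapse : ∀ i : A × A,
        (∑ p ∈ (rx1 i).index, σ (ry.left j) * σ ((rx1 i).left p) *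
          ((rx1 i).right p * (ry2 j).left q * σ (rx.right i * (ry2 j).right q)))
        = Coalgebra.counit (R:=k) (rx.left i) •
            (σ (ry.left j) * ((ry2 j).left q * σ (rx.right i * (ry2 j).right q))) := by
      intro i
      calc (∑ p ∈ (rx1 i).index, σ (ry.left j) * σ ((rx1 i).left p) *
            ((rx1 i).right p * (ry2 j).left q * σ (rx.right i * (ry2 j).right q)))
          = ∑ p ∈ (rx1 i).index, σ (ry.left j) *
              ((σ ((rx1 i).left p) * (rx1 i).right p) *
                ((ry2 j).left q * σ (rx.right i * (ry2 j).right q))) := by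
            refine Finset.sum_congr rfl fun p _ => ?_
            simp only [mul_assoc]
        _ = σ (ry.left j) *
              ((∑ p ∈ (rx1 i).index, σ ((rx1 i).left p) * (rx1 i).right p) *
                ((ry2 j).left q * σ (rx.right i * (ry2 j).right q))) := by
            rw [← Finset.mul_sum, ← Finset.sum_mul]
        _ = Coalgebra.counit (R:=k) (rx.left i) •
            (σ (ry.left j) * ((ry2 j).left q * σ (rx.right i * (ry2 j).right q))) := by
            rw [HopfAlgebra.sum_antipode_mul_eq_smul (rx1 i), smul_mul_assoc, one_mul,
              Algebra.mul_smul_comm]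
    calc ∑ i ∈ rx.index, ∑ p ∈ (rx1 i).index, σ (ry.left j) * σ ((rx1 i).left p) *
          ((rx1 i).right p * (ry2 j).left q * σ (rx.right i * (ry2 j).right q))
        = ∑ i ∈ rx.index, Coalgebra.counit (R:=k) (rx.left i) •
            (σ (ry.left j) * ((ry2 j).left q * σ (rx.right i * (ry2 j).right q))) :=
          Finset.sum_congr rfl fun i _ => collapse i
      _ = σ (ry.left j) * ((ry2 j).left q * σ (x * (ry2 j).right q)) := by
          have hmap := bp5_counit_smul_map rx (LinearMap.mulLeft k (σ (ry.left j)) ∘ₗ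
            LinearMap.mulLeft k ((ry2 j).left q) ∘ₗ HopfAlgebra.antipode (R:=k) ∘ₗ
            LinearMap.mulRight k ((ry2 j).right q))
          simpa only [LinearMap.comp_apply, LinearMap.mulLeft_apply,
            LinearMap.mulRight_apply] using hmap
  -- Step D: y-coassociativity and collapse of the y-part
  have hD := congrArg (bp5_tri (HopfAlgebra.antipode (R:=k)) (LinearMap.id (R:=k) (M:=A))
      (HopfAlgebra.antipode (R:=k) ∘ₗ LinearMap.mulLeft k x))
    (Coalgebra.sum_tmul_tmul_eq (R:=k) ry ry1 ry2)
  simp only [map_sum, bp5_tri_apply, LinearMap.comp_apply, LinearMap.mulLeft_apply,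
    LinearMap.id_apply] at hD
  rw [stepC, ← hD]
  symm
  have collapseY : ∀ j : A × A,
      (∑ p ∈ (ry1 j).index, σ ((ry1 j).left p) *
        ((ry1 j).right p * σ (x * ry.right j)))
      = Coalgebra.counit (R:=k) (ry.left j) • σ (x * ry.right j) := by
    intro j
    calc (∑ p ∈ (ry1 j).index, σ ((ry1 j).left p) * ((ry1 j).right p * σ (x * ry.right j)))
        = (∑ p ∈ (ry1 j).index, σ ((ry1 j).left p) * (ry1 j).right p) * σ (x * ry.right j) := by
          rw [Finset.sum_mul]
          exact Finset.sum_congr rfl fun p _ => (mul_assoc _ _ _).symm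
      _ = Coalgebra.counit (R:=k) (ry.left j) • σ (x * ry.right j) := by
          rw [HopfAlgebra.sum_antipode_mul_eq_smul (ry1 j), smul_mul_assoc, one_mul]
  calc ∑ j ∈ ry.index, ∑ p ∈ (ry1 j).index, σ ((ry1 j).left p) *
        ((ry1 j).right p * σ (x * ry.right j))
      = ∑ j ∈ ry.index, Coalgebra.counit (R:=k) (ry.left j) • σ (x * ry.right j) :=
        Finset.sum_congr rfl fun j _ => collapseY j
    _ = σ (x * y) := by
        have hmap := bp5_counit_smul_map ry (HopfAlgebra.antipode (R:=k) ∘ₗ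
          LinearMap.mulLeft k x)
        simpa only [LinearMap.comp_apply, LinearMap.mulLeft_apply] using hmap

lemma bp5_sum_sInv (sInv : A →ₗ[k] A) (hsInv : ∀ x : A, sInv (σ x) = x)
    (hsInv' : ∀ x : A, σ (sInv x) = x) {c : A} {ι : Type*} (r : Coalgebra.Repr k c ι) :
    ∑ i ∈ r.index, sInv (r.right i) * r.left i = Coalgebra.counit (R:=k) c • 1 := by
  have hs1 : sInv (1 : A) = 1 := by
    have := hsInv 1
    rwa [bp5_antipode_one] at this
  have h : σ (∑ i ∈ r.index, sInv (r.right i) * r.left i)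
      = Coalgebra.counit (R:=k) c • 1 := by
    rw [map_sum]
    calc ∑ i ∈ r.index, σ (sInv (r.right i) * r.left i)
        = ∑ i ∈ r.index, σ (r.left i) * r.right i := by
          refine Finset.sum_congr rfl fun i _ => ?_
          rw [bp5_antipode_mul, hsInv']
      _ = Coalgebra.counit (R:=k) c • 1 := HopfAlgebra.sum_antipode_mul_eq_smul r
  have h2 := congrArg sInv h
  rw [hsInv] at h2
  rw [h2, map_smul, hs1]
end helpers

/-- Bead push identity 5: `∑ a s(e) ⊗ e' = ∑ s(e) a₂ ⊗ s⁻¹(a₃) e' a₁`. -/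
theorem bead_push_five
    {k : Type*} [Field k] {A : Type*} [Ring A] [HopfAlgebra k A]
    {ι : Type*} [Fintype ι] (e e' : ι → A)
    (ρ : A ⊗[k] A) (hρ : ρ = ∑ j, e j ⊗ₜ[k] e' j)
    -- intertwining: ρ Δ(x) = Δᵒᵖ(x) ρ
    (h1 : ∀ x : A, ρ * Coalgebra.comul x
        = (TensorProduct.comm k A A) (Coalgebra.comul x) * ρ)
    (a : A) {κ : Type*} [Fintype κ] (a1 a2 a3 : κ → A)
    -- Δ²(a) = ∑ i, a₁ ⊗ a₂ ⊗ a₃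
    (ha : (TensorProduct.map (Coalgebra.comul (R := k)) LinearMap.id) (Coalgebra.comul a)
        = ∑ i, (a1 i ⊗ₜ[k] a2 i) ⊗ₜ[k] a3 i)
    (sInv : A →ₗ[k] A)
    (hsInv : ∀ x : A, sInv (HopfAlgebra.antipode (R := k) x) = x)
    (hsInv' : ∀ x : A, HopfAlgebra.antipode (R := k) (sInv x) = x)
    -- (s ⊗ 1)ρ = ρ⁻¹
    (hinv : (∑ j, (HopfAlgebra.antipode (R := k) (e j)) ⊗ₜ[k] e' j) * ρ = 1
        ∧ ρ * (∑ j, (HopfAlgebra.antipode (R := k) (e j)) ⊗ₜ[k] e' j) = 1) :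
    ∑ j, (a * HopfAlgebra.antipode (R := k) (e j)) ⊗ₜ[k] e' j
      = ∑ i, ∑ j, (HopfAlgebra.antipode (R := k) (e j) * a2 i) ⊗ₜ[k]
          (sInv (a3 i) * e' j * a1 i) := by
  classical
  set ρ' : A ⊗[k] A := ∑ j, (HopfAlgebra.antipode (R := k) (e j)) ⊗ₜ[k] e' j with hρ'
  -- Step 1: intertwining for ρ'
  have step1 : ∀ x : A, Coalgebra.comul (R:=k) x * ρ'
      = ρ' * (TensorProduct.comm k A A) (Coalgebra.comul x) := by
    intro x
    calc Coalgebra.comul (R:=k) x * ρ'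
        = (ρ' * ρ) * (Coalgebra.comul (R:=k) x * ρ') := by rw [hinv.1, one_mul]
      _ = ρ' * ((ρ * Coalgebra.comul (R:=k) x) * ρ') := by
          simp only [mul_assoc]
      _ = ρ' * (((TensorProduct.comm k A A) (Coalgebra.comul (R:=k) x) * ρ) * ρ') := by
          rw [h1 x]
      _ = ρ' * (TensorProduct.comm k A A) (Coalgebra.comul (R:=k) x) := by
          rw [mul_assoc, hinv.2, mul_one]
  set r := ℛ k a with hr
  set r1 : (i : A × A) → Coalgebra.Repr k (r.left i) (A × A) := fun i => ℛ k (r.left i) with hr1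
  set r2 : (i : A × A) → Coalgebra.Repr k (r.right i) (A × A) := fun i => ℛ k (r.right i) with hr2
  -- the map G
  set Q : A →ₗ[k] A ⊗[k] A := TensorProduct.mk k A A 1 ∘ₗ sInv with hQ
  set P : A ⊗[k] A →ₗ[k] A ⊗[k] A :=
    LinearMap.mulLeft k ρ' ∘ₗ (TensorProduct.comm k A A).toLinearMap with hP
  set G : (A ⊗[k] A) ⊗[k] A →ₗ[k] A ⊗[k] A :=
    LinearMap.mul' k (A ⊗[k] A) ∘ₗ TensorProduct.map Q P ∘ₗ
      (TensorProduct.comm k (A ⊗[k] A) A).toLinearMap with hG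
  have hGapp : ∀ (u : A ⊗[k] A) (z : A), G (u ⊗ₜ[k] z) = Q z * P u := fun u z => rfl
  -- RHS = G (Δ² a)
  have hRHS : ∑ i, ∑ j, (HopfAlgebra.antipode (R := k) (e j) * a2 i) ⊗ₜ[k]
        (sInv (a3 i) * e' j * a1 i)
      = G ((TensorProduct.map (Coalgebra.comul (R := k)) LinearMap.id)
          (Coalgebra.comul a)) := by
    rw [ha, map_sum]
    refine Finset.sum_congr rfl fun i _ => ?_
    rw [hGapp]
    have : P (a1 i ⊗ₜ[k] a2 i) = ρ' * (a2 i ⊗ₜ[k] a1 i) := rfl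
    rw [this, hQ]
    simp only [LinearMap.comp_apply, TensorProduct.mk_apply, hρ', Finset.sum_mul,
      Finset.mul_sum, Algebra.TensorProduct.tmul_mul_tmul, one_mul, mul_assoc]
  -- transform G (Δ² a) using the representation r and step1
  have hG2 : G ((TensorProduct.map (Coalgebra.comul (R := k)) LinearMap.id)
        (Coalgebra.comul a))
      = (∑ i ∈ r.index, (1 ⊗ₜ[k] sInv (r.right i)) * Coalgebra.comul (R:=k) (r.left i))
          * ρ' := by
    rw [← r.eq, map_sum, map_sum, Finset.sum_mul]
    refine Finset.sum_congr rfl fun i _ => ?_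
    rw [TensorProduct.map_tmul, LinearMap.id_apply, hGapp]
    have hPc : P (Coalgebra.comul (R:=k) (r.left i))
        = Coalgebra.comul (R:=k) (r.left i) * ρ' := by
      rw [hP]
      simp only [LinearMap.comp_apply, LinearMap.mulLeft_apply, LinearEquiv.coe_coe]
      exact (step1 (r.left i)).symm
    rw [hPc, hQ]
    simp only [LinearMap.comp_apply, TensorProduct.mk_apply]
    rw [← mul_assoc]
  -- the key collapse: ∑ (1 ⊗ sInv a₂) Δ(a₁) = a ⊗ 1
  have hK : ∑ i ∈ r.index, (1 ⊗ₜ[k] sInv (r.right i)) * Coalgebra.comul (R:=k) (r.left i)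
      = a ⊗ₜ[k] 1 := by
    set inner : A ⊗[k] A →ₗ[k] A :=
      LinearMap.mul' k A ∘ₗ TensorProduct.map sInv LinearMap.id ∘ₗ
        (TensorProduct.comm k A A).toLinearMap with hinner
    set Φ : A ⊗[k] (A ⊗[k] A) →ₗ[k] A ⊗[k] A := LinearMap.lTensor A inner with hΦ
    have hΦapp : ∀ u v w : A, Φ (u ⊗ₜ[k] (v ⊗ₜ[k] w)) = u ⊗ₜ[k] (sInv w * v) := by
      intro u v w; rfl
    have hco := congrArg Φ (Coalgebra.sum_tmul_tmul_eq (R:=k) r r1 r2)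
    simp only [map_sum, hΦapp] at hco
    calc ∑ i ∈ r.index, (1 ⊗ₜ[k] sInv (r.right i)) * Coalgebra.comul (R:=k) (r.left i)
        = ∑ i ∈ r.index, ∑ p ∈ (r1 i).index,
            (r1 i).left p ⊗ₜ[k] (sInv (r.right i) * (r1 i).right p) := by
          refine Finset.sum_congr rfl fun i _ => ?_
          rw [← (r1 i).eq, Finset.mul_sum]
          exact Finset.sum_congr rfl fun p _ => by
            rw [Algebra.TensorProduct.tmul_mul_tmul, one_mul]
      _ = ∑ i ∈ r.index, ∑ q ∈ (r2 i).index,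
            r.left i ⊗ₜ[k] (sInv ((r2 i).right q) * (r2 i).left q) := hco
      _ = ∑ i ∈ r.index, Coalgebra.counit (R:=k) (r.right i) • (r.left i ⊗ₜ[k] (1:A)) := by
          refine Finset.sum_congr rfl fun i _ => ?_
          rw [← TensorProduct.tmul_sum, bp5_sum_sInv sInv hsInv hsInv' (r2 i),
            TensorProduct.tmul_smul]
      _ = a ⊗ₜ[k] 1 := by
          have hmap := bp5_smul_counit_map r ((TensorProduct.mk k A A).flip 1)
          simpa only [LinearMap.flip_apply, TensorProduct.mk_apply] using hmap
  -- finish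
  calc ∑ j, (a * HopfAlgebra.antipode (R := k) (e j)) ⊗ₜ[k] e' j
      = (a ⊗ₜ[k] (1:A)) * ρ' := by
        rw [hρ', Finset.mul_sum]
        exact Finset.sum_congr rfl fun j _ => by
          rw [Algebra.TensorProduct.tmul_mul_tmul, one_mul]
    _ = (∑ i ∈ r.index, (1 ⊗ₜ[k] sInv (r.right i)) * Coalgebra.comul (R:=k) (r.left i))
          * ρ' := by rw [hK]
    _ = G ((TensorProduct.map (Coalgebra.comul (R := k)) LinearMap.id)
          (Coalgebra.comul a)) := hG2.symm
    _ = ∑ i, ∑ j, (HopfAlgebra.antipode (R := k) (e j) * a2 i) ⊗ₜ[k]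
          (sInv (a3 i) * e' j * a1 i) := hRHS.symm
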